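/- Every 4-dimensional 2-step nilpotent Lie algebra over K (K = ℝ or ℂ) admits a symplectic form. -/

import Mathlib

/-- A symplectic form on a Lie algebra `g` over `K`: a `K`-bilinear form which is
alternating, nondegenerate and closed, i.e.
`θ ⁅X,Y⁆ Z + θ ⁅Y,Z⁆ X + θ ⁅Z,X⁆ Y = 0` for all `X Y Z`. -/
def IsSymplecticForm (K : Type*) [RCLike K] (g : Type*) [LieRing g] [LieAlgebra K g]
    (θ : g → g → K) : Prop :=
  (∀ (a : K) (X Y Z : g), θ (a • X + Y) Z = a * θ X Z + θ Y Z) ∧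
  (∀ (a : K) (X Y Z : g), θ X (a • Y + Z) = a * θ X Y + θ X Z) ∧
  (∀ X : g, θ X X = 0) ∧
  (∀ X : g, (∀ Y : g, θ X Y = 0) → X = 0) ∧
  (∀ X Y Z : g, θ ⁅X, Y⁆ Z + θ ⁅Y, Z⁆ X + θ ⁅Z, X⁆ Y = 0)
/-- A Lie algebra is 2-step nilpotent if `[[g,g],g] = 0` and `[g,g] ≠ 0`. -/
def IsTwoStepNilpotent (g : Type*) [LieRing g] : Prop :=
  (∀ X Y Z : g, ⁅⁅X, Y⁆, Z⁆ = 0) ∧ ∃ X Y : g, ⁅X, Y⁆ ≠ 0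

/-- Every 4-dimensional 2-step nilpotent Lie algebra over `K` admits a symplectic form. -/
private lemma lie_zero_of_basis {K g : Type*} [RCLike K] [LieRing g] [LieAlgebra K g]
    {n : ℕ} (b : Module.Basis (Fin n) K g) (x : g) (h : ∀ i, ⁅x, b i⁆ = 0) (y : g) : ⁅x, y⁆ = 0 := by
  rw [← LieAlgebra.ad_apply (R := K), ← b.sum_repr y, map_sum]
  simp [LieAlgebra.ad_apply, h]

private lemma lie_repr4 {K g : Type*} [RCLike K] [LieRing g] [LieAlgebra K g]
    (b : Module.Basis (Fin 4) K g)
    (h2 : ∀ y : g, ⁅b 2, y⁆ = 0) (h3 : ∀ y : g, ⁅b 3, y⁆ = 0) (X Y : g) :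
    ⁅X, Y⁆ = (b.repr X 0 * b.repr Y 1 - b.repr X 1 * b.repr Y 0) • ⁅b 0, b 1⁆ := by
  have h2' : ∀ y : g, ⁅y, b 2⁆ = 0 := fun y => by rw [← lie_skew, h2, neg_zero]
  have h3' : ∀ y : g, ⁅y, b 3⁆ = 0 := fun y => by rw [← lie_skew, h3, neg_zero]
  have h10 : ⁅b 1, b 0⁆ = -⁅b 0, b 1⁆ := by rw [← lie_skew]
  conv_lhs => rw [← b.sum_repr X, ← b.sum_repr Y]
  rw [Fin.sum_univ_four, Fin.sum_univ_four]
  simp only [add_lie, lie_add, smul_lie, lie_smul, h2, h3, h2', h3', lie_self,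
    smul_zero, add_zero, zero_add, h10, smul_neg]
  module


theorem symplectic_of_fourDim_twoStep
    (K : Type*) [RCLike K] (g : Type*) [LieRing g] [LieAlgebra K g] [FiniteDimensional K g]
    (h2 : IsTwoStepNilpotent g) (h4 : Module.finrank K g = 4) :
    ∃ θ : g → g → K, IsSymplecticForm K g θ := by
  classical
  obtain ⟨hnil, X₁, Y₁, hW⟩ := h2
  set W : g := ⁅X₁, Y₁⁆ with hWdef
  have hWc : ∀ y : g, ⁅W, y⁆ = 0 := fun y => hnil X₁ Y₁ y
  have hWc' : ∀ y : g, ⁅y, W⁆ = 0 := fun y => by rw [← lie_skew, hWc, neg_zero]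
  have hsmul : ∀ k : K, k • W = 0 → k = 0 := by
    intro k hk
    rcases smul_eq_zero.mp hk with h | h
    · exact h
    · exact absurd h hW
  -- Step 1: every bracket is a multiple of W
  have keyA : ∀ U V : g, ∃ k : K, ⁅U, V⁆ = k • W := by
    by_contra hcon
    push_neg at hcon
    obtain ⟨U, V, hUV⟩ := hcon
    set W₂ : g := ⁅U, V⁆ with hW₂def
    have hW₂c : ∀ y : g, ⁅W₂, y⁆ = 0 := fun y => hnil U V y
    have hindep : LinearIndependent K ![X₁, Y₁, W, W₂] := by
      rw [Fintype.linearIndependent_iff]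
      intro c hc
      rw [Fin.sum_univ_four] at hc
      simp only [Matrix.cons_val_zero, Matrix.cons_val_one, Matrix.head_cons,
        Matrix.cons_val_two, Matrix.tail_cons, Matrix.cons_val_three] at hc
      have e1 : ⁅c 0 • X₁ + c 1 • Y₁ + c 2 • W + c 3 • W₂, Y₁⁆ = 0 := by rw [hc, zero_lie]
      simp only [add_lie, smul_lie, hWc, hW₂c, lie_self, smul_zero, add_zero] at e1
      have hc0 : c 0 = 0 := hsmul _ e1
      have e2 : ⁅c 0 • X₁ + c 1 • Y₁ + c 2 • W + c 3 • W₂, X₁⁆ = 0 := by rw [hc, zero_lie]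
      have hYX : ⁅Y₁, X₁⁆ = -W := by rw [← lie_skew]
      simp only [add_lie, smul_lie, hWc, hW₂c, lie_self, smul_zero, add_zero, zero_add,
        hYX, smul_neg] at e2
      have hc1 : c 1 = 0 := hsmul _ (neg_eq_zero.mp e2)
      rw [hc0, hc1, zero_smul, zero_smul, zero_add, zero_add] at hc
      have hc3 : c 3 = 0 := by
        by_contra h3ne
        apply hUV (-(c 3)⁻¹ * c 2)
        have h1 : c 3 • W₂ = -(c 2 • W) := eq_neg_of_add_eq_zero_right hc
        have h2 : W₂ = (c 3)⁻¹ • (c 3 • W₂) := by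
          rw [smul_smul, inv_mul_cancel₀ h3ne, one_smul]
        rw [h2, h1, smul_neg, smul_smul, ← neg_smul, neg_mul]
      rw [hc3, zero_smul, add_zero] at hc
      have hc2 : c 2 = 0 := hsmul _ hc
      intro i
      fin_cases i <;> assumption
    have hcard : Fintype.card (Fin 4) = Module.finrank K g := by simp [h4]
    let b := basisOfLinearIndependentOfCardEqFinrank hindep hcard
    have hb : ⇑b = ![X₁, Y₁, W, W₂] := coe_basisOfLinearIndependentOfCardEqFinrank hindep hcard
    have hb2 : ∀ y : g, ⁅b 2, y⁆ = 0 := by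
      intro y; rw [show b 2 = W from by rw [hb]; rfl]; exact hWc y
    have hb3 : ∀ y : g, ⁅b 3, y⁆ = 0 := by
      intro y; rw [show b 3 = W₂ from by rw [hb]; rfl]; exact hW₂c y
    have := lie_repr4 b hb2 hb3 U V
    rw [show b 0 = X₁ from by rw [hb]; rfl, show b 1 = Y₁ from by rw [hb]; rfl] at this
    exact hUV _ this
  -- Step 2: construct E outside span {X₁, Y₁, W}
  have hindep3 : LinearIndependent K ![X₁, Y₁, W] := by
    rw [Fintype.linearIndependent_iff]
    intro c hc
    rw [Fin.sum_univ_three] at hc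
    simp only [Matrix.cons_val_zero, Matrix.cons_val_one, Matrix.head_cons,
      Matrix.cons_val_two, Matrix.tail_cons] at hc
    have e1 : ⁅c 0 • X₁ + c 1 • Y₁ + c 2 • W, Y₁⁆ = 0 := by rw [hc, zero_lie]
    simp only [add_lie, smul_lie, hWc, lie_self, smul_zero, add_zero] at e1
    have hc0 : c 0 = 0 := hsmul _ e1
    have e2 : ⁅c 0 • X₁ + c 1 • Y₁ + c 2 • W, X₁⁆ = 0 := by rw [hc, zero_lie]
    have hYX : ⁅Y₁, X₁⁆ = -W := by rw [← lie_skew]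
    simp only [add_lie, smul_lie, hWc, lie_self, smul_zero, add_zero, zero_add,
      hYX, smul_neg] at e2
    have hc1 : c 1 = 0 := hsmul _ (neg_eq_zero.mp e2)
    rw [hc0, hc1, zero_smul, zero_smul, zero_add, zero_add] at hc
    have hc2 : c 2 = 0 := hsmul _ hc
    intro i; fin_cases i <;> assumption
  have hspan3 : Submodule.span K (Set.range ![X₁, Y₁, W]) ≠ ⊤ := by
    intro htop
    have h3 : Module.finrank K ↥(Submodule.span K (Set.range ![X₁, Y₁, W])) = 3 := by
      rw [finrank_span_eq_card hindep3]; simp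
    rw [htop, finrank_top, h4] at h3
    omega
  obtain ⟨e4, he4⟩ : ∃ x : g, x ∉ Submodule.span K (Set.range ![X₁, Y₁, W]) := by
    by_contra hall
    push_neg at hall
    exact hspan3 (Submodule.eq_top_iff'.mpr hall)
  obtain ⟨k1, hk1⟩ := keyA e4 Y₁
  obtain ⟨k2, hk2⟩ := keyA e4 X₁
  set E : g := e4 - k1 • X₁ + k2 • Y₁ with hEdef
  have hEY : ⁅E, Y₁⁆ = 0 := by
    rw [hEdef, add_lie, sub_lie, smul_lie, smul_lie, lie_self, smul_zero, add_zero, hk1]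
    rw [← hWdef, sub_self]
  have hEX : ⁅E, X₁⁆ = 0 := by
    have hYX : ⁅Y₁, X₁⁆ = -W := by rw [← lie_skew]
    rw [hEdef, add_lie, sub_lie, smul_lie, smul_lie, lie_self, smul_zero, sub_zero, hk2,
      hYX, smul_neg]
    exact add_neg_cancel _
  have hmemW : W ∈ Submodule.span K (Set.range ![X₁, Y₁, W]) :=
    Submodule.subset_span ⟨2, rfl⟩
  have hmemX : X₁ ∈ Submodule.span K (Set.range ![X₁, Y₁, W]) :=
    Submodule.subset_span ⟨0, rfl⟩
  have hmemY : Y₁ ∈ Submodule.span K (Set.range ![X₁, Y₁, W]) :=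
    Submodule.subset_span ⟨1, rfl⟩
  have hindep4 : LinearIndependent K ![X₁, Y₁, W, E] := by
    rw [Fintype.linearIndependent_iff]
    intro c hc
    rw [Fin.sum_univ_four] at hc
    simp only [Matrix.cons_val_zero, Matrix.cons_val_one, Matrix.head_cons,
      Matrix.cons_val_two, Matrix.tail_cons, Matrix.cons_val_three] at hc
    have e1 : ⁅c 0 • X₁ + c 1 • Y₁ + c 2 • W + c 3 • E, Y₁⁆ = 0 := by rw [hc, zero_lie]
    simp only [add_lie, smul_lie, hWc, hEY, lie_self, smul_zero, add_zero] at e1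
    have hc0 : c 0 = 0 := hsmul _ e1
    have e2 : ⁅c 0 • X₁ + c 1 • Y₁ + c 2 • W + c 3 • E, X₁⁆ = 0 := by rw [hc, zero_lie]
    have hYX : ⁅Y₁, X₁⁆ = -W := by rw [← lie_skew]
    simp only [add_lie, smul_lie, hWc, hEX, lie_self, smul_zero, add_zero, zero_add,
      hYX, smul_neg] at e2
    have hc1 : c 1 = 0 := hsmul _ (neg_eq_zero.mp e2)
    rw [hc0, hc1, zero_smul, zero_smul, zero_add, zero_add] at hc
    have hc3 : c 3 = 0 := by
      by_contra h3ne
      apply he4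
      rw [hEdef] at hc
      have he4eq : c 3 • e4 = (-(c 2)) • W + (c 3 * k1) • X₁ + (-(c 3 * k2)) • Y₁ := by
        linear_combination (norm := module) hc
      have hrw : e4 = (c 3)⁻¹ • ((-(c 2)) • W + (c 3 * k1) • X₁ + (-(c 3 * k2)) • Y₁) := by
        rw [← he4eq, smul_smul, inv_mul_cancel₀ h3ne, one_smul]
      rw [hrw]
      exact Submodule.smul_mem _ _ (add_mem (add_mem (Submodule.smul_mem _ _ hmemW)
        (Submodule.smul_mem _ _ hmemX)) (Submodule.smul_mem _ _ hmemY))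
    rw [hc3, zero_smul, add_zero] at hc
    have hc2 : c 2 = 0 := hsmul _ hc
    intro i; fin_cases i <;> assumption
  have hcard : Fintype.card (Fin 4) = Module.finrank K g := by simp [h4]
  let b := basisOfLinearIndependentOfCardEqFinrank hindep4 hcard
  have hb : ⇑b = ![X₁, Y₁, W, E] := coe_basisOfLinearIndependentOfCardEqFinrank hindep4 hcard
  have hb0 : b 0 = X₁ := by rw [hb]; rfl
  have hb1 : b 1 = Y₁ := by rw [hb]; rfl
  have hb2W : b 2 = W := by rw [hb]; rfl
  have hb3E : b 3 = E := by rw [hb]; rfl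
  have hb2 : ∀ y : g, ⁅b 2, y⁆ = 0 := by intro y; rw [hb2W]; exact hWc y
  have hb3 : ∀ y : g, ⁅b 3, y⁆ = 0 := by
    refine lie_zero_of_basis b (b 3) (fun i => ?_)
    fin_cases i
    · show ⁅b 3, b 0⁆ = 0
      rw [hb3E, hb0]; exact hEX
    · show ⁅b 3, b 1⁆ = 0
      rw [hb3E, hb1]; exact hEY
    · show ⁅b 3, b 2⁆ = 0
      rw [hb3E, hb2W]; exact hWc' E
    · show ⁅b 3, b 3⁆ = 0
      exact lie_self _
  have hbrkt : ∀ X Y : g, ⁅X, Y⁆ = (b.repr X 0 * b.repr Y 1 - b.repr X 1 * b.repr Y 0) • b 2 := by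
    intro X Y
    rw [lie_repr4 b hb2 hb3 X Y, hb0, hb1, ← hWdef, hb2W]
  refine ⟨fun X Y => b.repr X 0 * b.repr Y 2 - b.repr X 2 * b.repr Y 0
      + b.repr X 1 * b.repr Y 3 - b.repr X 3 * b.repr Y 1, ?_, ?_, ?_, ?_, ?_⟩
  · intro a X Y Z
    simp only [map_add, map_smul, Finsupp.add_apply, Finsupp.smul_apply, smul_eq_mul]
    ring
  · intro a X Y Z
    simp only [map_add, map_smul, Finsupp.add_apply, Finsupp.smul_apply, smul_eq_mul]
    ring
  · intro X; ring
  · intro X hX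
    have h0 := hX (b 2)
    have h1 := hX (b 3)
    have h2' := hX (b 0)
    have h3' := hX (b 1)
    simp [Module.Basis.repr_self, Finsupp.single_apply] at h0 h1 h2' h3'
    have hs := b.sum_repr X
    rw [Fin.sum_univ_four] at hs
    rw [← hs]
    simp [h0, h1, h2', h3']
  · intro X Y Z
    rw [hbrkt X Y, hbrkt Y Z, hbrkt Z X]
    simp only [map_smul, Module.Basis.repr_self, Finsupp.smul_apply, Finsupp.single_apply,
      smul_eq_mul]
    simp only [Fin.isValue, show ((2:Fin 4) = 0) = False from by simp,
      show ((2:Fin 4) = 1) = False from by simp, show ((2:Fin 4) = 3) = False from by simp,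
      show ((2:Fin 4) = 2) = True from by simp, if_true, if_false, mul_zero, zero_mul,
      mul_one, sub_zero, add_zero, zero_add, zero_sub, sub_self]
    ring
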